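/- In the two-sided Witt algebra W(G,I) with G = ℤ^r and I = {1,…,r}, the linear map θ : W_r → W(G,I) sending x^a ∂_i to −w(a − e_i, i) is an injective homomorphism of Lie algebras, where W_r = Der(F[x_1,…,x_r]). -/

import Mathlib

open MvPolynomial

private lemma aux_mkD_mono (F : Type*) [Field F] {r : ℕ} (i : Fin r) (a b : Fin r →₀ ℕ) :
    MvPolynomial.mkDerivation F (Pi.single i (MvPolynomial.monomial a (1 : F)))
        (MvPolynomial.monomial b 1) =
      ((b i : F)) • MvPolynomial.monomial (a + b - Finsupp.single i 1) (1 : F) := by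
  classical
  rw [MvPolynomial.mkDerivation_monomial, one_smul, Finsupp.sum, Finset.sum_eq_single i]
  · rw [Pi.single_eq_same, smul_eq_mul, MvPolynomial.monomial_mul, mul_one,
      MvPolynomial.smul_monomial, smul_eq_mul, mul_one]
    by_cases hb : b i = 0
    · simp [hb]
    · have h : b - Finsupp.single i 1 + a = a + b - Finsupp.single i 1 := by
        ext m
        simp only [Finsupp.add_apply, Finsupp.tsub_apply, Finsupp.single_apply]
        split_ifs with h
        · subst h; omega
        · omega
      rw [h]
  · intro k _ hk
    rw [Pi.single_eq_of_ne hk, smul_zero]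
  · intro hi
    rw [Finsupp.notMem_support_iff.mp hi]
    simp

set_option maxHeartbeats 1000000 in
/-- In the two-sided Witt algebra `W(G, I)` with `G = ℤ^r` and `I = {1, …, r}` (an
abstract Lie algebra with basis `w(a, i)` and bracket
`[w(a,i), w(b,j)] = a_j w(a+b, i) − b_i w(a+b, j)`), the linear map
`θ : W_r → W(G, I)` sending `x^a ∂_i` to `−w(a − e_i, i)` is an injective homomorphism of
Lie algebras, where `W_r = Der(F[x_1, …, x_r])`. -/
theorem stmt11 (F : Type*) [Field F] [CharZero F] (r : ℕ) (W : Type*)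
    [LieRing W] [LieAlgebra F W]
    (bw : Module.Basis ((Fin r → ℤ) × Fin r) F W) (w : (Fin r → ℤ) × Fin r → W)
    (hw : ∀ ai, w ai = bw ai)
    (hbracketW : ∀ (a b : Fin r → ℤ) (i j : Fin r),
      ⁅w (a, i), w (b, j)⁆ =
        ((a j : F)) • w (a + b, i) - ((b i : F)) • w (a + b, j))
    (θ : Derivation F (MvPolynomial (Fin r) F) (MvPolynomial (Fin r) F) →ₗ[F] W)
    (hθ : ∀ (a : Fin r →₀ ℕ) (i : Fin r),
      θ (MvPolynomial.mkDerivation F (Pi.single i (MvPolynomial.monomial a 1))) =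
        - w (fun j => (a j : ℤ) - (if j = i then 1 else 0), i)) :
    Function.Injective θ ∧
      ∀ D₁ D₂ : Derivation F (MvPolynomial (Fin r) F) (MvPolynomial (Fin r) F),
        θ ⁅D₁, D₂⁆ = ⁅θ D₁, θ D₂⁆ := by
  classical
  set Der := Derivation F (MvPolynomial (Fin r) F) (MvPolynomial (Fin r) F) with hDer
  set mkD : Fin r → (Fin r →₀ ℕ) → Der :=
    fun i a => MvPolynomial.mkDerivation F (Pi.single i (MvPolynomial.monomial a 1)) with hmkD
  have hmkeq : ∀ f : Fin r → MvPolynomial (Fin r) F,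
      MvPolynomial.mkDerivationEquiv F f = MvPolynomial.mkDerivation F f := fun _ => rfl
  set bD : Module.Basis ((_ : Fin r) × (Fin r →₀ ℕ)) F Der :=
    (Pi.basis fun _ : Fin r => MvPolynomial.basisMonomials (Fin r) F).map
      (MvPolynomial.mkDerivationEquiv F) with hbDdef
  have hbD : ∀ x : (_ : Fin r) × (Fin r →₀ ℕ), bD x = mkD x.1 x.2 := by
    rintro ⟨i, a⟩
    rw [hbDdef, Module.Basis.map_apply, Pi.basis_apply, hmkeq, hmkD]
    simp [MvPolynomial.coe_basisMonomials]
  have hθ' : ∀ (i : Fin r) (a : Fin r →₀ ℕ),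
      θ (mkD i a) = - w (fun m => (a m : ℤ) - (if m = i then 1 else 0), i) :=
    fun i a => hθ a i
  -- the index embedding
  set ι : ((_ : Fin r) × (Fin r →₀ ℕ)) → (Fin r → ℤ) × Fin r :=
    fun x => (fun m => (x.2 m : ℤ) - (if m = x.1 then 1 else 0), x.1) with hιdef
  have hι : Function.Injective ι := by
    rintro ⟨i, a⟩ ⟨j, b⟩ h
    simp only [hιdef, Prod.mk.injEq] at h
    obtain ⟨h1, rfl⟩ := h
    have : a = b := by
      ext m
      have := congrFun h1 m
      omega
    simp [this]
  -- injectivity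
  have hli : LinearIndependent F fun x : ((_ : Fin r) × (Fin r →₀ ℕ)) => θ (bD x) := by
    have h1 : LinearIndependent F fun x => bw (ι x) :=
      bw.linearIndependent.comp ι hι
    have h2 := h1.map' (-(LinearMap.id : W →ₗ[F] W))
      (by rw [LinearMap.ker_eq_bot]; intro x y hxy; simpa using hxy)
    have h3 : ((-(LinearMap.id : W →ₗ[F] W)) ∘ fun x => bw (ι x)) =
        fun x : ((_ : Fin r) × (Fin r →₀ ℕ)) => θ (bD x) := by
      funext x
      simp only [Function.comp_apply, LinearMap.neg_apply, LinearMap.id_coe, id_eq,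
        hbD x, hθ' x.1 x.2, hw, hιdef]
    rwa [h3] at h2
  have hinj : Function.Injective θ := by
    rw [← LinearMap.ker_eq_bot, LinearMap.ker_eq_bot']
    intro m hm
    have h0 : Finsupp.linearCombination F (fun x => θ (bD x)) (bD.repr m) = 0 := by
      have h := Finsupp.apply_linearCombination F θ (⇑bD) (bD.repr m)
      rw [Module.Basis.linearCombination_repr] at h
      rw [show ((fun x => θ (bD x)) : ((_ : Fin r) × (Fin r →₀ ℕ)) → W) = (⇑θ ∘ ⇑bD) from rfl,
        ← h, hm]
    have hrep := linearIndependent_iff.mp hli _ h0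
    have := congrArg bD.repr.symm hrep
    simpa using this
  -- bracket on basis elements
  have hcore : ∀ x y : ((_ : Fin r) × (Fin r →₀ ℕ)),
      θ ⁅bD x, bD y⁆ = ⁅θ (bD x), θ (bD y)⁆ := by
    rintro ⟨i, a⟩ ⟨j, b⟩
    rw [hbD ⟨i, a⟩, hbD ⟨j, b⟩]
    have hcomm : ⁅mkD i a, mkD j b⁆ =
        (b i : F) • mkD j (a + b - Finsupp.single i 1) -
        (a j : F) • mkD i (a + b - Finsupp.single j 1) := by
      apply MvPolynomial.derivation_ext
      intro k
      rw [Derivation.commutator_apply, Derivation.sub_apply, Derivation.smul_apply,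
        Derivation.smul_apply]
      simp only [hmkD, MvPolynomial.mkDerivation_X, Pi.single_apply]
      split_ifs with h1 h2 h2 <;>
        simp [aux_mkD_mono, add_comm a b, map_zero, smul_smul, mul_comm]
    have key : ∀ (k l : Fin r), a l + b l ≠ 0 →
        (fun m => (((a + b - Finsupp.single l 1 : Fin r →₀ ℕ)) m : ℤ) - (if m = k then 1 else 0)) =
        ((fun m => (a m : ℤ) - (if m = k then 1 else 0)) +
          fun m => (b m : ℤ) - (if m = l then 1 else 0)) := by
      intro k l h
      funext m
      simp only [Pi.add_apply, Finsupp.tsub_apply, Finsupp.add_apply, Finsupp.single_apply]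
      by_cases hml : m = l
      · subst hml
        by_cases hmk : m = k
        · subst hmk; simp; try omega
        · simp [hmk]; try omega
      · by_cases hmk : m = k
        · subst hmk
          simp [Ne.symm hml]
          try omega
        · simp [hmk, hml, Ne.symm hml]
          try omega
    have key2 : ∀ (k l : Fin r), a l + b l ≠ 0 →
        (fun m => (((a + b - Finsupp.single l 1 : Fin r →₀ ℕ)) m : ℤ) - (if m = k then 1 else 0)) =
        ((fun m => (a m : ℤ) - (if m = l then 1 else 0)) +
          fun m => (b m : ℤ) - (if m = k then 1 else 0)) := by
      intro k l h
      funext m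
      simp only [Pi.add_apply, Finsupp.tsub_apply, Finsupp.add_apply, Finsupp.single_apply]
      by_cases hml : m = l
      · subst hml
        by_cases hmk : m = k
        · subst hmk; simp; try omega
        · simp [hmk]; try omega
      · by_cases hmk : m = k
        · subst hmk
          simp [Ne.symm hml]
          try omega
        · simp [hmk, hml, Ne.symm hml]
          try omega
    rw [hcomm, map_sub, map_smul, map_smul, hθ' j (a + b - Finsupp.single i 1),
      hθ' i (a + b - Finsupp.single j 1), hθ' i a, hθ' j b,
      smul_neg, smul_neg, sub_neg_eq_add, lie_neg, neg_lie, neg_neg, hbracketW]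
    beta_reduce
    rcases eq_or_ne i j with rfl | hij
    · -- i = j
      simp only [eq_self_iff_true, if_true]
      by_cases h0 : a i + b i = 0
      · have ha : a i = 0 := by omega
        have hb : b i = 0 := by omega
        simp [ha, hb]
      · rw [key i i h0]
        match_scalars <;> push_cast <;> ring
    · -- i ≠ j
      have t1 : ((a j : ℕ) : F) •
          w (fun m => (((a + b - Finsupp.single j 1 : Fin r →₀ ℕ)) m : ℤ) - (if m = i then 1 else 0), i) =
          ((a j : ℕ) : F) • w (((fun m => (a m : ℤ) - (if m = i then 1 else 0)) +
            fun m => (b m : ℤ) - (if m = j then 1 else 0)), i) := by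
        by_cases h : a j = 0
        · simp [h]
        · rw [key i j (by omega)]
      have t2 : ((b i : ℕ) : F) •
          w (fun m => (((a + b - Finsupp.single i 1 : Fin r →₀ ℕ)) m : ℤ) - (if m = j then 1 else 0), j) =
          ((b i : ℕ) : F) • w (((fun m => (a m : ℤ) - (if m = i then 1 else 0)) +
            fun m => (b m : ℤ) - (if m = j then 1 else 0)), j) := by
        by_cases h : b i = 0
        · simp [h]
        · rw [key2 j i (by omega)]
      rw [t1, t2, if_neg (Ne.symm hij), if_neg hij]
      match_scalars <;> push_cast <;> ring
  -- extend by bilinearity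
  have hbr : ∀ D₁ D₂ : Der, θ ⁅D₁, D₂⁆ = ⁅θ D₁, θ D₂⁆ := by
    set B₁ : Der →ₗ[F] Der →ₗ[F] W :=
      LinearMap.mk₂ F (fun D₁ D₂ => θ ⁅D₁, D₂⁆)
        (fun m n p => by beta_reduce; rw [show ⁅m + n, p⁆ = ⁅m, p⁆ + ⁅n, p⁆ from add_lie m n p, map_add])
        (fun c m n => by beta_reduce; rw [show ⁅c • m, n⁆ = c • ⁅m, n⁆ from smul_lie c m n, map_smul])
        (fun m n p => by beta_reduce; rw [show ⁅m, n + p⁆ = ⁅m, n⁆ + ⁅m, p⁆ from lie_add m n p, map_add])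
        (fun c m n => by beta_reduce; rw [show ⁅m, c • n⁆ = c • ⁅m, n⁆ from lie_smul c m n, map_smul]) with hB₁
    set B₂ : Der →ₗ[F] Der →ₗ[F] W :=
      LinearMap.mk₂ F (fun D₁ D₂ => ⁅θ D₁, θ D₂⁆)
        (fun m n p => by simp only [map_add, add_lie])
        (fun c m n => by simp only [map_smul, smul_lie])
        (fun m n p => by simp only [map_add, lie_add])
        (fun c m n => by simp only [map_smul, lie_smul]) with hB₂
    have hBeq : B₁ = B₂ := by
      apply LinearMap.ext_basis bD bD
      intro x y
      simp only [hB₁, hB₂, LinearMap.mk₂_apply]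
      exact hcore x y
    intro D₁ D₂
    have := LinearMap.congr_fun (LinearMap.congr_fun hBeq D₁) D₂
    simpa only [hB₁, hB₂, LinearMap.mk₂_apply] using this
  exact ⟨hinj, hbr⟩
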